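/- In L_n^q, for all 1 ≤ i, j ≤ n the following commutation relations hold: x_i z_j = q^{(-1)^{i-1}} z_j x_i if j is odd and j < i-1; x_i z_j = z_j x_i if j is even and j < i-1; x_i z_{i-1} = z_{i-1} x_i + (q-1) z_{i-2} if i is odd; x_i z_{i-1} = q^{-1} z_{i-1} x_i + (1-q^{-1}) z_{i-2} if i is even; x_i z_j = z_j x_i if j is odd and j ≥ i; x_i z_j = q^{(-1)^{i-1}} z_j x_i if j is even and j ≥ i. -/

import Mathlib

noncomputable section

open FreeAlgebra

/-- Defining relations of the linear connected quantized Weyl algebra `L_n^q`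
(generators indexed `0,…,n-1`, corresponding to `x_1,…,x_n`). -/
inductive LRel (K : Type) [Field K] (n : ℕ) (q : K) :
    FreeAlgebra K (Fin n) → FreeAlgebra K (Fin n) → Prop
  | adj (i j : Fin n) (h : j.1 = i.1 + 1) :
      LRel K n q (ι K i * ι K j)
        (q • (ι K j * ι K i) + algebraMap K (FreeAlgebra K (Fin n)) (1 - q))
  | far_odd (i j : Fin n) (h : i.1 + 1 < j.1) (ho : Odd (j.1 - i.1)) :
      LRel K n q (ι K i * ι K j) (q • (ι K j * ι K i))
  | far_even (i j : Fin n) (h : i.1 + 1 < j.1) (he : Even (j.1 - i.1)) :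
      LRel K n q (ι K i * ι K j) (q⁻¹ • (ι K j * ι K i))

/-- The linear connected quantized Weyl algebra `L_n^q`. -/
abbrev LWeyl (K : Type) [Field K] (n : ℕ) (q : K) := RingQuot (LRel K n q)

/-- The generator `x_m` (1-based) of `L_n^q`. -/
def Lgen (K : Type) [Field K] (n : ℕ) (q : K) (m : ℕ) : LWeyl K n q :=
  if h : m - 1 < n then RingQuot.mkAlgHom K (LRel K n q) (ι K ⟨m - 1, h⟩) else 0

/-- Defining relations of the cyclic connected quantized Weyl algebra `C_n^q`. -/
inductive CRel (K : Type) [Field K] (n : ℕ) (q : K) :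
    FreeAlgebra K (Fin n) → FreeAlgebra K (Fin n) → Prop
  | adj (i j : Fin n) (h : j.1 = i.1 + 1) :
      CRel K n q (ι K i * ι K j)
        (q • (ι K j * ι K i) + algebraMap K (FreeAlgebra K (Fin n)) (1 - q))
  | cyc (i j : Fin n) (hi : i.1 = 0) (hj : j.1 = n - 1) :
      CRel K n q (ι K j * ι K i)
        (q • (ι K i * ι K j) + algebraMap K (FreeAlgebra K (Fin n)) (1 - q))
  | far_odd (i j : Fin n) (h : i.1 + 1 < j.1) (ho : Odd (j.1 - i.1)) :
      CRel K n q (ι K i * ι K j) (q • (ι K j * ι K i))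
  | far_even (i j : Fin n) (h : i.1 + 1 < j.1) (hj : j.1 + 1 < n) (he : Even (j.1 - i.1)) :
      CRel K n q (ι K i * ι K j) (q⁻¹ • (ι K j * ι K i))

/-- The cyclic connected quantized Weyl algebra `C_n^q`. -/
abbrev CWeyl (K : Type) [Field K] (n : ℕ) (q : K) := RingQuot (CRel K n q)

/-- The generator `x_m` (1-based) of `C_n^q`. -/
def Cgen (K : Type) [Field K] (n : ℕ) (q : K) (m : ℕ) : CWeyl K n q :=
  if h : m - 1 < n then RingQuot.mkAlgHom K (CRel K n q) (ι K ⟨m - 1, h⟩) else 0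

/-- The shifted sequence of elements `z_{-1} = 0`, `z_0 = 1`, `z_i = z_{i-1} x_i - z_{i-2}`:
here `zsh x k = z_{k-1}`, where `x` is 1-based access to the generators. -/
def zsh {R : Type} [Ring R] (x : ℕ → R) : ℕ → R
  | 0 => 0
  | 1 => 1
  | (k + 2) => zsh x (k + 1) * x (k + 1) - zsh x k

/-- The standard monomial `x_1^{a_1} ⋯ x_n^{a_n}`. -/
def stdMonomial {R : Type} [Ring R] (n : ℕ) (x : Fin n → R) (a : Fin n → ℕ) : R :=
  ((List.finRange n).map (fun i => x i ^ a i)).prod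

/-- The family of standard monomials is a `K`-basis. -/
def IsMonBasis (K : Type) [Field K] {R : Type} [Ring R] [Algebra K R] (n : ℕ)
    (x : Fin n → R) : Prop :=
  LinearIndependent K (fun a : Fin n → ℕ => stdMonomial n x a) ∧
    Submodule.span K (Set.range (fun a : Fin n → ℕ => stdMonomial n x a)) = ⊤

/-- A two-sided ideal is prime. -/
def IsTwoSidedPrime {R : Type} [Ring R] (P : TwoSidedIdeal R) : Prop :=
  P ≠ ⊤ ∧ ∀ a b : R, (∀ r : R, a * r * b ∈ P) → a ∈ P ∨ b ∈ P

/-- `q` is not a root of unity. -/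
def NotRootOfUnity {K : Type} [Field K] (q : K) : Prop :=
  ∀ k : ℕ, 0 < k → q ^ k ≠ 1


section
variable {K : Type} [Field K] {n : ℕ} {q : K}


variable {K : Type} [Field K] {n : ℕ} {q : K}

lemma Lgen_eq (m : ℕ) (h : m - 1 < n) :
    Lgen K n q m = RingQuot.mkAlgHom K (LRel K n q) (ι K ⟨m - 1, h⟩) := dif_pos h

lemma Ladj (i : ℕ) (h1 : 1 ≤ i) (h2 : i + 1 ≤ n) :
    Lgen K n q i * Lgen K n q (i+1)
      = q • (Lgen K n q (i+1) * Lgen K n q i) + (1 - q) • 1 := by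
  have hi : i - 1 < n := by omega
  have hj : i + 1 - 1 < n := by omega
  rw [Lgen_eq i hi, Lgen_eq (i+1) hj, ← map_mul, ← map_mul]
  have h := RingQuot.mkAlgHom_rel K
    (LRel.adj (K:=K) (n:=n) (q:=q) ⟨i-1,hi⟩ ⟨i+1-1,hj⟩ (by simp; omega))
  rw [h]
  simp [Algebra.algebraMap_eq_smul_one]

lemma Lfar_odd (i j : ℕ) (h1 : 1 ≤ i) (h : i + 1 < j) (h2 : j ≤ n) (ho : Odd (j - i)) :
    Lgen K n q i * Lgen K n q j = q • (Lgen K n q j * Lgen K n q i) := by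
  have hi : i - 1 < n := by omega
  have hj : j - 1 < n := by omega
  rw [Lgen_eq i hi, Lgen_eq j hj, ← map_mul, ← map_mul]
  have h := RingQuot.mkAlgHom_rel K
    (LRel.far_odd (K:=K) (n:=n) (q:=q) ⟨i-1,hi⟩ ⟨j-1,hj⟩ (by simp; omega)
      (by simpa using (by rwa [show j - 1 - (i - 1) = j - i by omega] at *)))
  rw [h]; simp

lemma Lfar_even (i j : ℕ) (h1 : 1 ≤ i) (h : i + 1 < j) (h2 : j ≤ n) (he : Even (j - i)) :
    Lgen K n q i * Lgen K n q j = q⁻¹ • (Lgen K n q j * Lgen K n q i) := by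
  have hi : i - 1 < n := by omega
  have hj : j - 1 < n := by omega
  rw [Lgen_eq i hi, Lgen_eq j hj, ← map_mul, ← map_mul]
  have h := RingQuot.mkAlgHom_rel K
    (LRel.far_even (K:=K) (n:=n) (q:=q) ⟨i-1,hi⟩ ⟨j-1,hj⟩ (by simp; omega)
      (by rwa [show (⟨j-1,hj⟩ : Fin n).1 - (⟨i-1,hi⟩ : Fin n).1 = j - i by simp; omega]))
  rw [h]; simp

lemma Ladj' (hq0 : q ≠ 0) (i : ℕ) (h1 : 1 ≤ i) (h2 : i + 1 ≤ n) :
    Lgen K n q (i+1) * Lgen K n q i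
      = q⁻¹ • (Lgen K n q i * Lgen K n q (i+1)) + (1 - q⁻¹) • 1 := by
  have h := Ladj (K:=K) (n:=n) (q:=q) i h1 h2
  have h' : q • (Lgen K n q (i+1) * Lgen K n q i)
      = Lgen K n q i * Lgen K n q (i+1) - (1-q) • 1 := by rw [h]; abel
  calc Lgen K n q (i+1) * Lgen K n q i
      = q⁻¹ • (q • (Lgen K n q (i+1) * Lgen K n q i)) := by
        rw [smul_smul, inv_mul_cancel₀ hq0, one_smul]
    _ = _ := by rw [h']; all_goals (match_scalars <;> field_simp <;> ring)

lemma Lfar_odd' (hq0 : q ≠ 0) (i j : ℕ) (h1 : 1 ≤ i) (h : i + 1 < j) (h2 : j ≤ n)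
    (ho : Odd (j - i)) :
    Lgen K n q j * Lgen K n q i = q⁻¹ • (Lgen K n q i * Lgen K n q j) := by
  rw [Lfar_odd i j h1 h h2 ho, smul_smul, inv_mul_cancel₀ hq0, one_smul]

lemma Lfar_even' (hq0 : q ≠ 0) (i j : ℕ) (h1 : 1 ≤ i) (h : i + 1 < j) (h2 : j ≤ n)
    (he : Even (j - i)) :
    Lgen K n q j * Lgen K n q i = q • (Lgen K n q i * Lgen K n q j) := by
  rw [Lfar_even i j h1 h h2 he, smul_smul, mul_inv_cancel₀ hq0, one_smul]

def qq (q : K) (i : ℕ) : K := if Odd i then q else q⁻¹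

def KeyP (K : Type) [Field K] (n : ℕ) (q : K) (j i : ℕ) : Prop :=
  (Odd j → j + 1 < i → Lgen K n q i * zsh (Lgen K n q) (j+1)
      = qq q i • (zsh (Lgen K n q) (j+1) * Lgen K n q i)) ∧
  (Even j → j + 1 < i → Lgen K n q i * zsh (Lgen K n q) (j+1)
      = zsh (Lgen K n q) (j+1) * Lgen K n q i) ∧
  (Odd i → j + 1 = i → Lgen K n q i * zsh (Lgen K n q) (j+1)
      = zsh (Lgen K n q) (j+1) * Lgen K n q i + (q - 1) • zsh (Lgen K n q) (i - 1)) ∧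
  (Even i → j + 1 = i → Lgen K n q i * zsh (Lgen K n q) (j+1)
      = q⁻¹ • (zsh (Lgen K n q) (j+1) * Lgen K n q i) + (1 - q⁻¹) • zsh (Lgen K n q) (i - 1)) ∧
  (Odd j → i ≤ j → Lgen K n q i * zsh (Lgen K n q) (j+1)
      = zsh (Lgen K n q) (j+1) * Lgen K n q i) ∧
  (Even j → i ≤ j → Lgen K n q i * zsh (Lgen K n q) (j+1)
      = qq q i • (zsh (Lgen K n q) (j+1) * Lgen K n q i))

lemma key (hq0 : q ≠ 0) : ∀ j, j ≤ n → ∀ i, 1 ≤ i → i ≤ n → KeyP K n q j i := by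
  intro j
  induction j using Nat.strong_induction_on with
  | _ j IH =>
    match j with
    | 0 =>
      intro _ i h1 h2
      refine ⟨fun ho => by simp at ho, fun _ _ => by simp [zsh],
        fun hoi hji => ?_, fun hei hji => ?_,
        fun _ hij => by omega, fun _ hij => by omega⟩
      · have : i = 1 := by omega
        subst this
        simp [zsh]
      · have : i = 1 := by omega
        subst this
        simp [Nat.even_iff] at hei
    | 1 =>
      intro hjn i h1 h2
      have hz : zsh (Lgen K n q) 2 = Lgen K n q 1 := by simp [zsh]
      refine ⟨fun _ hi => ?_, fun he => by simp [Nat.even_iff] at he,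
        fun hoi hji => by rw [Nat.odd_iff] at hoi; omega, fun hei hji => ?_,
        fun _ hij => ?_, fun he => by simp [Nat.even_iff] at he⟩
      · -- (a) at j = 1 : Odd 1, 2 < i
        rw [hz]
        rcases Nat.even_or_odd i with hp | hp
        · have hqq : qq q i = q⁻¹ := by
            rw [qq, if_neg]; rw [Nat.even_iff] at hp; rw [Nat.odd_iff]; omega
          rw [hqq]
          exact Lfar_odd' hq0 1 i le_rfl hi h2
            (by rw [Nat.even_iff] at hp; rw [Nat.odd_iff]; omega)
        · have hqq : qq q i = q := by rw [qq, if_pos hp]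
          rw [hqq]
          exact Lfar_even' hq0 1 i le_rfl hi h2
            (by rw [Nat.odd_iff] at hp; rw [Nat.even_iff]; omega)
      · -- (d) at j = 1 : i = 2
        have hi2 : i = 2 := by omega
        subst hi2
        have h := Ladj' (K:=K) (n:=n) (q:=q) hq0 1 le_rfl (by omega)
        rw [hz]
        have h1' : zsh (Lgen K n q) (2 - 1) = 1 := rfl
        rw [h1']
        exact h
      · -- (e) at j = 1 : i = 1
        have hi1 : i = 1 := by omega
        subst hi1
        rw [hz]
    | (m + 2) =>
      intro hjn i h1 h2
      obtain ⟨a1, b1, c1, d1, e1, f1⟩ := IH (m+1) (by omega) (by omega) i h1 h2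
      obtain ⟨a0, b0, c0, d0, e0, f0⟩ := IH m (by omega) (by omega) i h1 h2
      have hexp : zsh (Lgen K n q) (m+2+1)
          = zsh (Lgen K n q) (m+2) * Lgen K n q (m+2) - zsh (Lgen K n q) (m+1) := rfl
      refine ⟨?_, ?_, ?_, ?_, ?_, ?_⟩
      · -- (a) : Odd (m+2), m+3 < i
        intro ho hlt
        have hm : m % 2 = 1 := by rw [Nat.odd_iff] at ho; omega
        have hA := b1 (by rw [Nat.even_iff]; omega) (by omega)
        have hB := a0 (by rw [Nat.odd_iff]; omega) (by omega)
        rcases Nat.even_or_odd i with hp | hp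
        · have hqq : qq q i = q⁻¹ := by
            rw [qq, if_neg]; rw [Nat.even_iff] at hp; rw [Nat.odd_iff]; omega
          rw [Nat.even_iff] at hp
          rw [hqq] at hB ⊢
          have hsw := Lfar_odd' (K:=K) (n:=n) (q:=q) hq0 (m+2) i (by omega) (by omega) h2
            (by rw [Nat.odd_iff]; omega)
          rw [hexp, mul_sub, sub_mul, ← mul_assoc, hA, hB, mul_assoc, hsw]
          simp only [smul_mul_assoc, mul_smul_comm, smul_smul, smul_sub, smul_add,
            sub_mul, add_mul, mul_sub, mul_add, mul_assoc, mul_one, one_mul]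
          all_goals (match_scalars <;> field_simp)
        · have hqq : qq q i = q := by rw [qq, if_pos hp]
          rw [Nat.odd_iff] at hp
          rw [hqq] at hB ⊢
          have hsw := Lfar_even' (K:=K) (n:=n) (q:=q) hq0 (m+2) i (by omega) (by omega) h2
            (by rw [Nat.even_iff]; omega)
          rw [hexp, mul_sub, sub_mul, ← mul_assoc, hA, hB, mul_assoc, hsw]
          simp only [smul_mul_assoc, mul_smul_comm, smul_smul, smul_sub, smul_add,
            sub_mul, add_mul, mul_sub, mul_add, mul_assoc, mul_one, one_mul]
          all_goals (match_scalars <;> field_simp)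
      · -- (b) : Even (m+2), m+3 < i
        intro he hlt
        have hm : m % 2 = 0 := by rw [Nat.even_iff] at he; omega
        have hA := a1 (by rw [Nat.odd_iff]; omega) (by omega)
        have hB := b0 (by rw [Nat.even_iff]; omega) (by omega)
        rcases Nat.even_or_odd i with hp | hp
        · have hqq : qq q i = q⁻¹ := by
            rw [qq, if_neg]; rw [Nat.even_iff] at hp; rw [Nat.odd_iff]; omega
          rw [Nat.even_iff] at hp
          rw [hqq] at hA
          have hsw := Lfar_even' (K:=K) (n:=n) (q:=q) hq0 (m+2) i (by omega) (by omega) h2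
            (by rw [Nat.even_iff]; omega)
          rw [hexp, mul_sub, sub_mul, ← mul_assoc, hA, hB, smul_mul_assoc, mul_assoc, hsw]
          simp only [smul_mul_assoc, mul_smul_comm, smul_smul, smul_sub, smul_add,
            sub_mul, add_mul, mul_sub, mul_add, mul_assoc, mul_one, one_mul]
          all_goals (match_scalars <;> field_simp)
        · have hqq : qq q i = q := by rw [qq, if_pos hp]
          rw [Nat.odd_iff] at hp
          rw [hqq] at hA
          have hsw := Lfar_odd' (K:=K) (n:=n) (q:=q) hq0 (m+2) i (by omega) (by omega) h2
            (by rw [Nat.odd_iff]; omega)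
          rw [hexp, mul_sub, sub_mul, ← mul_assoc, hA, hB, smul_mul_assoc, mul_assoc, hsw]
          simp only [smul_mul_assoc, mul_smul_comm, smul_smul, smul_sub, smul_add,
            sub_mul, add_mul, mul_sub, mul_add, mul_assoc, mul_one, one_mul]
          all_goals (match_scalars <;> field_simp)
      · -- (c) : Odd i, m+3 = i
        intro hoi hji
        subst hji
        have hm : m % 2 = 0 := by rw [Nat.odd_iff] at hoi; omega
        have hA := a1 (by rw [Nat.odd_iff]; omega) (by omega)
        have hqq : qq q (m+2+1) = q := by rw [qq, if_pos hoi]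
        rw [hqq] at hA
        have hB := b0 (by rw [Nat.even_iff]; omega) (by omega)
        have hsw := Ladj' (K:=K) (n:=n) (q:=q) hq0 (m+2) (by omega) (by omega)
        rw [hexp, mul_sub, sub_mul, ← mul_assoc, hA, hB, smul_mul_assoc, mul_assoc, hsw]
        simp only [Nat.add_sub_cancel, smul_mul_assoc, mul_smul_comm, smul_smul, smul_sub,
          smul_add, sub_mul, add_mul, mul_sub, mul_add, mul_assoc, mul_one, one_mul]
        all_goals (match_scalars <;> field_simp)
      · -- (d) : Even i, m+3 = i
        intro hei hji
        subst hji
        have hm : m % 2 = 1 := by rw [Nat.even_iff] at hei; omega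
        have hA := b1 (by rw [Nat.even_iff]; omega) (by omega)
        have hB := a0 (by rw [Nat.odd_iff]; omega) (by omega)
        have hqq : qq q (m+2+1) = q⁻¹ := by
          rw [qq, if_neg]; rw [Nat.even_iff] at hei; rw [Nat.odd_iff]; omega
        rw [hqq] at hB
        have hsw := Ladj' (K:=K) (n:=n) (q:=q) hq0 (m+2) (by omega) (by omega)
        rw [hexp, mul_sub, sub_mul, ← mul_assoc, hA, hB, mul_assoc, hsw]
        simp only [Nat.add_sub_cancel, smul_mul_assoc, mul_smul_comm, smul_smul, smul_sub,
          smul_add, sub_mul, add_mul, mul_sub, mul_add, mul_assoc, mul_one, one_mul]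
        all_goals (match_scalars <;> field_simp)
      · -- (e) : Odd (m+2), i ≤ m+2
        intro ho hij
        have hm : m % 2 = 1 := by rw [Nat.odd_iff] at ho; omega
        by_cases h3 : i = m+2
        · -- regime 3 : j = i, i odd
          subst h3
          have hA := c1 ho (by omega)
          have hB := a0 (by rw [Nat.odd_iff]; omega) (by omega)
          have hqq : qq q (m+2) = q := by rw [qq, if_pos ho]
          rw [hqq] at hB
          rw [show m+2-1 = m+1 by omega] at hA
          rw [hexp, mul_sub, sub_mul, ← mul_assoc, hA, hB]
          simp only [smul_mul_assoc, mul_smul_comm, smul_smul, smul_sub, smul_add,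
            sub_mul, add_mul, mul_sub, mul_add, mul_assoc, mul_one, one_mul]
          all_goals (match_scalars <;> field_simp <;> ring)
        by_cases h4 : i = m+1
        · -- regime 4 : j = i+1, i even
          subst h4
          have hA := f1 (by rw [Nat.even_iff]; omega) le_rfl
          have hqq : qq q (m+1) = q⁻¹ := by
            rw [qq, if_neg]; rw [Nat.odd_iff]; omega
          rw [hqq] at hA
          have hB := d0 (by rw [Nat.even_iff]; omega) rfl
          rw [Nat.add_sub_cancel] at hB
          have hsw := Ladj (K:=K) (n:=n) (q:=q) (m+1) (by omega) (by omega)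
          rw [hexp, mul_sub, sub_mul, ← mul_assoc, hA, hB, smul_mul_assoc, mul_assoc, hsw]
          rw [show zsh (Lgen K n q) (m+2)
              = zsh (Lgen K n q) (m+1) * Lgen K n q (m+1) - zsh (Lgen K n q) m from rfl]
          simp only [smul_mul_assoc, mul_smul_comm, smul_smul, smul_sub, smul_add,
            sub_mul, add_mul, mul_sub, mul_add, mul_assoc, mul_one, one_mul]
          all_goals (match_scalars <;> field_simp <;> ring)
        · -- regime 5 : i ≤ m
          have hile : i ≤ m := by omega
          have hA := f1 (by rw [Nat.even_iff]; omega) (by omega)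
          have hB := e0 (by rw [Nat.odd_iff]; omega) hile
          rcases Nat.even_or_odd i with hp | hp
          · have hqq : qq q i = q⁻¹ := by
              rw [qq, if_neg]; rw [Nat.even_iff] at hp; rw [Nat.odd_iff]; omega
            rw [Nat.even_iff] at hp
            rw [hqq] at hA
            have hsw := Lfar_odd (K:=K) (n:=n) (q:=q) i (m+2) h1 (by omega) (by omega)
              (by rw [Nat.odd_iff]; omega)
            rw [hexp, mul_sub, sub_mul, ← mul_assoc, hA, hB, smul_mul_assoc, mul_assoc, hsw]
            simp only [smul_mul_assoc, mul_smul_comm, smul_smul, smul_sub, smul_add,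
              sub_mul, add_mul, mul_sub, mul_add, mul_assoc, mul_one, one_mul]
            all_goals (match_scalars <;> field_simp)
          · have hqq : qq q i = q := by rw [qq, if_pos hp]
            rw [Nat.odd_iff] at hp
            rw [hqq] at hA
            have hsw := Lfar_even (K:=K) (n:=n) (q:=q) i (m+2) h1 (by omega) (by omega)
              (by rw [Nat.even_iff]; omega)
            rw [hexp, mul_sub, sub_mul, ← mul_assoc, hA, hB, smul_mul_assoc, mul_assoc, hsw]
            simp only [smul_mul_assoc, mul_smul_comm, smul_smul, smul_sub, smul_add,
              sub_mul, add_mul, mul_sub, mul_add, mul_assoc, mul_one, one_mul]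
            all_goals (match_scalars <;> field_simp)
      · -- (f) : Even (m+2), i ≤ m+2
        intro he hij
        have hm : m % 2 = 0 := by rw [Nat.even_iff] at he; omega
        by_cases h3 : i = m+2
        · -- regime 3 : j = i, i even
          subst h3
          have hA := d1 he (by omega)
          have hB := b0 (by rw [Nat.even_iff]; omega) (by omega)
          have hqq : qq q (m+2) = q⁻¹ := by
            rw [qq, if_neg]; rw [Nat.odd_iff]; omega
          rw [hqq]
          rw [show m+2-1 = m+1 by omega] at hA
          rw [hexp, mul_sub, sub_mul, ← mul_assoc, hA, hB]
          simp only [smul_mul_assoc, mul_smul_comm, smul_smul, smul_sub, smul_add,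
            sub_mul, add_mul, mul_sub, mul_add, mul_assoc, mul_one, one_mul]
          all_goals (match_scalars <;> field_simp <;> ring)
        by_cases h4 : i = m+1
        · -- regime 4 : j = i+1, i odd
          subst h4
          have hqq : qq q (m+1) = q := by
            rw [qq, if_pos]; rw [Nat.odd_iff]; omega
          rw [hqq]
          have hA := e1 (by rw [Nat.odd_iff]; omega) le_rfl
          have hB := c0 (by rw [Nat.odd_iff]; omega) rfl
          rw [Nat.add_sub_cancel] at hB
          have hsw := Ladj (K:=K) (n:=n) (q:=q) (m+1) (by omega) (by omega)
          rw [hexp, mul_sub, sub_mul, ← mul_assoc, hA, hB, mul_assoc, hsw]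
          rw [show zsh (Lgen K n q) (m+2)
              = zsh (Lgen K n q) (m+1) * Lgen K n q (m+1) - zsh (Lgen K n q) m from rfl]
          simp only [smul_mul_assoc, mul_smul_comm, smul_smul, smul_sub, smul_add,
            sub_mul, add_mul, mul_sub, mul_add, mul_assoc, mul_one, one_mul]
          all_goals (match_scalars <;> field_simp <;> ring)
        · -- regime 5 : i ≤ m
          have hile : i ≤ m := by omega
          have hA := e1 (by rw [Nat.odd_iff]; omega) (by omega)
          have hB := f0 (by rw [Nat.even_iff]; omega) hile
          rcases Nat.even_or_odd i with hp | hp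
          · have hqq : qq q i = q⁻¹ := by
              rw [qq, if_neg]; rw [Nat.even_iff] at hp; rw [Nat.odd_iff]; omega
            rw [Nat.even_iff] at hp
            rw [hqq] at hB ⊢
            have hsw := Lfar_even (K:=K) (n:=n) (q:=q) i (m+2) h1 (by omega) (by omega)
              (by rw [Nat.even_iff]; omega)
            rw [hexp, mul_sub, sub_mul, ← mul_assoc, hA, hB, mul_assoc, hsw]
            simp only [smul_mul_assoc, mul_smul_comm, smul_smul, smul_sub, smul_add,
              sub_mul, add_mul, mul_sub, mul_add, mul_assoc, mul_one, one_mul]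
            all_goals (match_scalars <;> field_simp)
          · have hqq : qq q i = q := by rw [qq, if_pos hp]
            rw [Nat.odd_iff] at hp
            rw [hqq] at hB ⊢
            have hsw := Lfar_odd (K:=K) (n:=n) (q:=q) i (m+2) h1 (by omega) (by omega)
              (by rw [Nat.odd_iff]; omega)
            rw [hexp, mul_sub, sub_mul, ← mul_assoc, hA, hB, mul_assoc, hsw]
            simp only [smul_mul_assoc, mul_smul_comm, smul_smul, smul_sub, smul_add,
              sub_mul, add_mul, mul_sub, mul_add, mul_assoc, mul_one, one_mul]
            all_goals (match_scalars <;> field_simp)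

lemma qpow (q : K) (i : ℕ) (h1 : 1 ≤ i) : (q ^ ((-1:ℤ)^(i-1))) = qq q i := by
  rcases Nat.even_or_odd i with hp | hp
  · have h : Odd (i-1) := by
      rw [Nat.odd_iff]; rw [Nat.even_iff] at hp; omega
    rw [Odd.neg_one_pow h, zpow_neg_one, qq, if_neg]
    rw [Nat.odd_iff]; rw [Nat.even_iff] at hp; omega
  · have h : Even (i-1) := by
      rw [Nat.even_iff]; rw [Nat.odd_iff] at hp; omega
    rw [Even.neg_one_pow h, zpow_one, qq, if_pos hp]

end

/-- Lemma 3.3: the commutation relations between the generators `x_i` and the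
elements `z_j` in `L_n^q` (here `z j` denotes `z_j`, realized as `zsh x (j+1)`). -/
theorem stmt6 (K : Type) [Field K] [IsAlgClosed K] (n : ℕ) (hn : 3 ≤ n) (q : K)
    (hq0 : q ≠ 0) (hq1 : q ≠ 1) :
    let x : ℕ → LWeyl K n q := Lgen K n q
    let z : ℕ → LWeyl K n q := fun j => zsh x (j + 1)
    ∀ i j : ℕ, 1 ≤ i → i ≤ n → 1 ≤ j → j ≤ n →
      (Odd j → j < i - 1 →
        x i * z j = (q ^ ((-1 : ℤ) ^ (i - 1))) • (z j * x i)) ∧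
      (Even j → j < i - 1 → x i * z j = z j * x i) ∧
      (Odd i → j = i - 1 →
        x i * z j = z j * x i + (q - 1) • z (i - 2)) ∧
      (Even i → j = i - 1 →
        x i * z j = q⁻¹ • (z j * x i) + (1 - q⁻¹) • z (i - 2)) ∧
      (Odd j → i ≤ j → x i * z j = z j * x i) ∧
      (Even j → i ≤ j →
        x i * z j = (q ^ ((-1 : ℤ) ^ (i - 1))) • (z j * x i)) := by
  intro x z i j hi1 hi2 hj1 hj2
  obtain ⟨a, b, c, d, e, f⟩ := key (K:=K) (n:=n) (q:=q) hq0 j hj2 i hi1 hi2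
  refine ⟨fun ho hlt => ?_, fun he hlt => ?_, fun hoi hji => ?_, fun hei hji => ?_,
    fun ho hij => ?_, fun he hij => ?_⟩
  · rw [qpow q i hi1]; exact a ho (by omega)
  · exact b he (by omega)
  · have h := c hoi (by omega)
    rw [show i - 1 = i - 2 + 1 by omega] at h
    exact h
  · have h := d hei (by omega)
    rw [show i - 1 = i - 2 + 1 by omega] at h
    exact h
  · exact e ho hij
  · rw [qpow q i hi1]; exact f he hij

end
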